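/- arXiv:1210.5577 — 2 statements merged into one kernel-verified Lean document; each statement's English description precedes it below -/
import Mathlib

section
/- Each map f_d : Q × S³ → Q × S³ (d ≥ 0) is a well-defined bijection and satisfies f_d ∘ f_d = id. -/
open Quaternion

noncomputable section

/-- `S³`: the group of unit quaternions. -/
abbrev S3 : Type := Metric.sphere (0 : ℍ[ℝ]) 1

/-- Membership in the circle subgroup `S¹ ⊆ S³` of unit quaternions of the
form `a + b·i` (zero `j`- and `k`-components). -/
def inS1 (z : S3) : Prop := (z : ℍ[ℝ]).imJ = 0 ∧ (z : ℍ[ℝ]).imK = 0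

/-- The right-coset relation on `S³`: `x ∼ x'` iff `x' = z·x` for some `z ∈ S¹`. -/
def cosetRel (x x' : S3) : Prop := ∃ z : S3, inS1 z ∧ x' = z * x

/-- `Q = S³/S¹`, the set of right cosets `S¹x`; the paper's model of `S²`. -/
def Q : Type := Quot cosetRel

/-- The paper's clutching diffeomorphism `F(S¹x, y) = (S¹(x·y), y⁻¹)`. -/
def Fmap : Q × S3 → Q × S3 := fun p =>
  (Quot.lift (fun x : S3 => Quot.mk cosetRel (x * p.2))
    (fun a b hab => by
      obtain ⟨z, hz, rfl⟩ := hab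
      exact Quot.sound ⟨z, hz, mul_assoc z a p.2⟩) p.1,
   p.2⁻¹)

/-- The reflection of `ℍ` negating the `k`-component. -/
def Lq (q : ℍ[ℝ]) : ℍ[ℝ] := ⟨q.re, q.imI, q.imJ, -q.imK⟩

lemma norm_Lq (q : ℍ[ℝ]) : ‖Lq q‖ = ‖q‖ := by
  rw [show ‖Lq q‖ = Real.sqrt (normSq (Lq q)) from rfl,
    show ‖q‖ = Real.sqrt (normSq q) from rfl]
  congr 1
  rw [normSq_def', normSq_def']
  simp [Lq]

/-- The restriction `L : S³ → S³` of the reflection negating the `k`-component. -/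
def Lsphere (y : S3) : S3 :=
  ⟨Lq (y : ℍ[ℝ]), by
    have hy : ‖(y : ℍ[ℝ])‖ = 1 := mem_sphere_zero_iff_norm.mp y.2
    simp [mem_sphere_zero_iff_norm, norm_Lq, hy]⟩

/-- `l(S¹x, y) = (S¹x, L y)`. -/
def lmap : Q × S3 → Q × S3 := fun p => (p.1, Lsphere p.2)

/-- The clutching maps: `f₀ = l` and `f_d = F ∘ l ∘ f_{d-1}`. -/
def fmap : ℕ → Q × S3 → Q × S3
  | 0 => lmap
  | d + 1 => Fmap ∘ lmap ∘ fmap d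



lemma Lq_mul (x y : ℍ[ℝ]) : Lq (x * y) = Lq y * Lq x := by
  ext <;> simp only [re_mul, imI_mul, imJ_mul, imK_mul] <;> simp [Lq] <;> ring

lemma Lq_Lq (q : ℍ[ℝ]) : Lq (Lq q) = q := by ext <;> simp [Lq]

lemma Ls_mul (x y : S3) : Lsphere (x * y) = Lsphere y * Lsphere x :=
  Subtype.ext (Lq_mul _ _)

lemma Ls_Ls (y : S3) : Lsphere (Lsphere y) = y := Subtype.ext (Lq_Lq _)

lemma Ls_one : Lsphere 1 = 1 := Subtype.ext (by ext <;> simp [Lq, Lsphere])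

lemma Ls_inv (y : S3) : Lsphere y⁻¹ = (Lsphere y)⁻¹ := by
  have h : Lsphere y * Lsphere y⁻¹ = 1 := by
    rw [← Ls_mul, inv_mul_cancel, Ls_one]
  exact (inv_eq_of_mul_eq_one_right h).symm

/-- `c y = y * (L y)⁻¹`. -/
def cfun (y : S3) : S3 := y * (Lsphere y)⁻¹

def wfun (d : ℕ) (y : S3) : S3 := cfun y ^ (d / 2) * y ^ (d % 2)

def sfun (d : ℕ) (y : S3) : S3 := if Even d then Lsphere y else y⁻¹

lemma wfun_zero (y : S3) : wfun 0 y = 1 := by simp [wfun]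

lemma wfun_succ_even {d : ℕ} (hd : Even d) (y : S3) :
    wfun (d + 1) y = wfun d y * y := by
  obtain ⟨k, rfl⟩ := hd
  have h1 : (k + k + 1) / 2 = k + k - k := by omega
  simp [wfun, Nat.add_mul_mod_self_left, h1, Nat.mul_mod_right, pow_succ,
    mul_assoc, Nat.add_sub_cancel, show (k+k)/2 = k by omega, show (k+k) % 2 = 0 by omega,
    show (k+k+1) % 2 = 1 by omega, show (k+k+1)/2 = k by omega]

lemma wfun_succ_odd {d : ℕ} (hd : ¬ Even d) (y : S3) :
    wfun (d + 1) y = wfun d y * (Lsphere y)⁻¹ := by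
  rw [Nat.not_even_iff_odd] at hd
  obtain ⟨k, rfl⟩ := hd
  simp [wfun, show (2*k+1)/2 = k by omega, show (2*k+1) % 2 = 1 by omega,
    show (2*k+1+1)/2 = k+1 by omega, show (2*k+1+1) % 2 = 0 by omega, pow_succ,
    cfun, mul_assoc]

lemma fmap_eq (d : ℕ) (x y : S3) :
    fmap d (Quot.mk cosetRel x, y) = (Quot.mk cosetRel (x * wfun d y), sfun d y) := by
  induction d with
  | zero => simp [fmap, lmap, wfun_zero, sfun]; rfl
  | succ d ih =>
    have : fmap (d+1) (Quot.mk cosetRel x, y)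
        = Fmap (lmap (fmap d (Quot.mk cosetRel x, y))) := rfl
    rw [this, ih]
    by_cases hd : Even d
    · have hs : sfun d y = Lsphere y := by simp [sfun, hd]
      have hs' : sfun (d+1) y = y⁻¹ := by simp [sfun, Nat.even_add_one, hd]
      rw [hs, hs']
      show (Quot.mk cosetRel (x * wfun d y * Lsphere (Lsphere y)), (Lsphere (Lsphere y))⁻¹)
        = _
      rw [Ls_Ls, wfun_succ_even hd, mul_assoc]
    · have hs : sfun d y = y⁻¹ := by simp [sfun, hd]
      have hs' : sfun (d+1) y = Lsphere y := by simp [sfun, Nat.even_add_one, hd]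
      rw [hs, hs']
      show (Quot.mk cosetRel (x * wfun d y * Lsphere y⁻¹), (Lsphere y⁻¹)⁻¹) = _
      rw [Ls_inv, inv_inv, wfun_succ_odd hd, mul_assoc]

lemma cfun_Ls (y : S3) : cfun (Lsphere y) = (cfun y)⁻¹ := by
  simp [cfun, Ls_Ls, mul_inv_rev]

lemma cfun_inv (y : S3) : cfun y⁻¹ = y⁻¹ * (cfun y)⁻¹ * y := by
  simp [cfun, Ls_inv, mul_inv_rev, mul_assoc]

lemma key (d : ℕ) (y : S3) :
    wfun d y * wfun d (sfun d y) = 1 ∧ sfun d (sfun d y) = y := by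
  by_cases hd : Even d
  · obtain ⟨k, rfl⟩ := hd
    have hs : sfun (k + k) y = Lsphere y := by simp [sfun]
    constructor
    · rw [hs]
      simp [wfun, show (k+k)/2 = k by omega, show (k+k)%2 = 0 by omega, cfun_Ls,
        inv_pow]
    · rw [hs]; simp [sfun, Ls_Ls]
  · rw [Nat.not_even_iff_odd] at hd
    obtain ⟨k, rfl⟩ := hd
    have hs : sfun (2*k+1) y = y⁻¹ := by simp [sfun, Nat.even_add_one, parity_simps]
    constructor
    · rw [hs]
      have h2 : (2*k+1)/2 = k := by omega
      have h3 : (2*k+1)%2 = 1 := by omega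
      simp only [wfun, h2, h3, pow_one]
      have hconj : ∀ n : ℕ, (y⁻¹ * (cfun y)⁻¹ * y) ^ n = y⁻¹ * ((cfun y)⁻¹) ^ n * y := by
        intro n
        induction n with
        | zero => simp
        | succ n ih => rw [pow_succ, ih, pow_succ]; group
      have hc : y * cfun y⁻¹ ^ k * y⁻¹ = (cfun y)⁻¹ ^ k := by
        rw [cfun_inv, hconj]; group
      calc cfun y ^ k * y * (cfun y⁻¹ ^ k * y⁻¹)
          = cfun y ^ k * (y * cfun y⁻¹ ^ k * y⁻¹) := by group
        _ = cfun y ^ k * (cfun y)⁻¹ ^ k := by rw [hc]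
        _ = 1 := by group
    · rw [hs]; simp [sfun, Nat.even_add_one, parity_simps]

/-- Each clutching map `f_d : Q × S³ → Q × S³` (`d ≥ 0`) is a (well-defined) bijection
and satisfies `f_d ∘ f_d = id`. -/
theorem stmt6 (d : ℕ) : Function.Bijective (fmap d) ∧ fmap d ∘ fmap d = id := by
  have hinv : Function.Involutive (fmap d) := by
    intro p
    obtain ⟨q, y⟩ := p
    induction q using Quot.ind with
    | mk x =>
      erw [fmap_eq, fmap_eq]
      obtain ⟨h1, h2⟩ := key d y
      rw [h2, mul_assoc, h1, mul_one]; rfl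
  exact ⟨hinv.bijective, funext hinv⟩
end
end

section
/- Let ι̂ : Q × S³ → Q × S³ be ι̂(S¹x, y) = (S¹(j·x), y). Then ι̂ ∘ f_d = f_d ∘ ι̂ for every d ≥ 0; in particular ι̂ ∘ F = F ∘ ι̂ and ι̂ ∘ l = l ∘ ι̂. -/
open Quaternion

noncomputable section

/-- The quaternion `i`. -/
def iq : ℍ[ℝ] := ⟨0, 1, 0, 0⟩

/-- The quaternion `j`. -/
def jq : ℍ[ℝ] := ⟨0, 0, 1, 0⟩

/-- `j` as a unit quaternion. -/
def jS3 : S3 :=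
  ⟨jq, by
    rw [mem_sphere_zero_iff_norm, show ‖jq‖ = Real.sqrt (normSq jq) from rfl]
    rw [normSq_def']
    simp [jq]⟩


lemma jq_mul_s1 (z : ℍ[ℝ]) (h1 : z.imJ = 0) (h2 : z.imK = 0) :
    jq * z = star z * jq := by
  ext <;>
    simp only [Quaternion.re_mul, Quaternion.imI_mul, Quaternion.imJ_mul,
      Quaternion.imK_mul, h1, h2] <;> simp [jq, h1, h2]

lemma ihat_wd (a b : S3) (hab : cosetRel a b) :
    Quot.mk cosetRel (jS3 * a) = Quot.mk cosetRel (jS3 * b) := by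
  obtain ⟨z, hz, rfl⟩ := hab
  have hzn : ‖(z : ℍ[ℝ])‖ = 1 := mem_sphere_zero_iff_norm.mp z.2
  refine Quot.sound ?_
  refine ⟨⟨star (z : ℍ[ℝ]), by rw [mem_sphere_zero_iff_norm, norm_star, hzn]⟩,
    ⟨by simp [hz.1], by simp [hz.2]⟩, ?_⟩
  apply Subtype.ext
  show (jq : ℍ[ℝ]) * ((z : ℍ[ℝ]) * (a : ℍ[ℝ]))
      = star (z : ℍ[ℝ]) * ((jq : ℍ[ℝ]) * (a : ℍ[ℝ]))
  rw [← mul_assoc, ← mul_assoc, jq_mul_s1 (z : ℍ[ℝ]) hz.1 hz.2]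

/-- The involution `ι̂(S¹x, y) = (S¹(j·x), y)`. -/
def ihatDef : Q × S3 → Q × S3 := fun p =>
  (Quot.lift (fun x : S3 => Quot.mk cosetRel (jS3 * x)) ihat_wd p.1, p.2)

lemma ihat_F : ihatDef ∘ Fmap = Fmap ∘ ihatDef := by
  funext p
  obtain ⟨x, hx⟩ := Quot.exists_rep p.1
  cases p with
  | mk q y =>
    cases hx
    show (Quot.mk cosetRel (jS3 * (x * y)), y⁻¹) = (Quot.mk cosetRel ((jS3 * x) * y), y⁻¹)
    rw [mul_assoc]

lemma ihat_l : ihatDef ∘ lmap = lmap ∘ ihatDef := by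
  funext p
  obtain ⟨x, hx⟩ := Quot.exists_rep p.1
  cases p with
  | mk q y => cases hx; rfl

lemma ihat_f (d : ℕ) : ihatDef ∘ fmap d = fmap d ∘ ihatDef := by
  induction d with
  | zero => exact ihat_l
  | succ d ih =>
    funext p
    show ihatDef (Fmap (lmap (fmap d p))) = Fmap (lmap (fmap d (ihatDef p)))
    have h1 := congrFun ihat_F (lmap (fmap d p))
    have h2 := congrFun ihat_l (fmap d p)
    have h3 := congrFun ih p
    simp only [Function.comp_apply] at h1 h2 h3
    rw [h1, h2, h3]

/-- Let `ι̂ : Q × S³ → Q × S³` be `ι̂(S¹x, y) = (S¹(j·x), y)`. Then `ι̂ ∘ f_d = f_d ∘ ι̂`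
for every `d ≥ 0`; in particular `ι̂ ∘ F = F ∘ ι̂` and `ι̂ ∘ l = l ∘ ι̂`. -/
theorem stmt8 :
    ∃ ihat : Q × S3 → Q × S3,
      (∀ x y : S3, ihat (Quot.mk cosetRel x, y) = (Quot.mk cosetRel (jS3 * x), y)) ∧
      (∀ d : ℕ, ihat ∘ fmap d = fmap d ∘ ihat) ∧
      ihat ∘ Fmap = Fmap ∘ ihat ∧ ihat ∘ lmap = lmap ∘ ihat :=
  ⟨ihatDef, fun _ _ => rfl, ihat_f, ihat_F, ihat_l⟩
end
end
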